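/- If p₁ and p₂ are positive bounded operators on Hilbert spaces H₁ and H₂ respectively, then the kernel of a₁ ⊗ id + id ⊗ a₂ on H₁ ⊗ H₂ equals ker(a₁) ⊗ ker(a₂) (the closed tensor product of the kernels). -/

import Mathlib

open scoped InnerProductSpace
open scoped TensorProduct

set_option linter.unusedSectionVars false
set_option maxHeartbeats 1000000

namespace Stmt8

open TensorProduct ContinuousLinearMap

variable {H₁ H₂ H : Type*}
  [NormedAddCommGroup H₁] [InnerProductSpace ℂ H₁] [CompleteSpace H₁]
  [NormedAddCommGroup H₂] [InnerProductSpace ℂ H₂] [CompleteSpace H₂]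
  [NormedAddCommGroup H] [InnerProductSpace ℂ H] [CompleteSpace H]
  (tp : H₁ →ₗ[ℂ] H₂ →ₗ[ℂ] H)
  (htp_inner : ∀ (x x' : H₁) (y y' : H₂),
      ⟪tp x y, tp x' y'⟫_ℂ = ⟪x, x'⟫_ℂ * ⟪y, y'⟫_ℂ)

include htp_inner in
lemma inner_map_left (e : H₁ →L[ℂ] H₁) (t t' : H₁ ⊗[ℂ] H₂) :
    ⟪TensorProduct.lift tp (TensorProduct.map e.toLinearMap LinearMap.id t),
        TensorProduct.lift tp t'⟫_ℂ
      = ⟪TensorProduct.lift tp t,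
          TensorProduct.lift tp (TensorProduct.map (adjoint e).toLinearMap LinearMap.id t')⟫_ℂ := by
  induction t using TensorProduct.induction_on with
  | zero => simp
  | tmul x y =>
    induction t' using TensorProduct.induction_on with
    | zero => simp
    | tmul x' y' =>
      simp only [map_tmul, lift.tmul, LinearMap.id_coe, id_eq, ContinuousLinearMap.coe_coe]
      rw [htp_inner, htp_inner, ContinuousLinearMap.adjoint_inner_right]
    | add u v hu hv => simp only [map_add, inner_add_right, hu, hv]
  | add u v hu hv => simp only [map_add, inner_add_left, hu, hv]

include htp_inner in
lemma key_mul (d : H₁ →L[ℂ] H₁) (t : H₁ ⊗[ℂ] H₂) :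
    ⟪TensorProduct.lift tp (TensorProduct.map ((adjoint d) * d).toLinearMap LinearMap.id t),
        TensorProduct.lift tp t⟫_ℂ
      = (‖TensorProduct.lift tp (TensorProduct.map d.toLinearMap LinearMap.id t)‖ : ℂ) ^ 2 := by
  have h1 : ((adjoint d) * d).toLinearMap = (adjoint d).toLinearMap ∘ₗ d.toLinearMap := rfl
  have h2 : TensorProduct.map ((adjoint d) * d).toLinearMap (LinearMap.id : H₂ →ₗ[ℂ] H₂)
      = (TensorProduct.map (adjoint d).toLinearMap LinearMap.id).comp
          (TensorProduct.map d.toLinearMap LinearMap.id) := by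
    rw [h1, ← TensorProduct.map_comp, LinearMap.id_comp]
  rw [h2, LinearMap.comp_apply,
    inner_map_left tp htp_inner (adjoint d) (TensorProduct.map d.toLinearMap LinearMap.id t) t,
    adjoint_adjoint]
  rw [inner_self_eq_norm_sq_to_K]; norm_cast

include htp_inner in
lemma norm_lift_map_le (e : H₁ →L[ℂ] H₁) (t : H₁ ⊗[ℂ] H₂) :
    ‖TensorProduct.lift tp (TensorProduct.map e.toLinearMap LinearMap.id t)‖
      ≤ ‖e‖ * ‖TensorProduct.lift tp t‖ := by
  set c : H₁ →L[ℂ] H₁ := ((‖e‖ : ℂ) ^ 2) • 1 - adjoint e * e with hc_def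
  have hc : 0 ≤ c := by
    rw [ContinuousLinearMap.nonneg_iff_isPositive]
    constructor
    · refine IsSelfAdjoint.isSymmetric ?_
      show star c = c
      rw [hc_def]
      simp only [star_sub, star_smul, star_mul, star_one, ContinuousLinearMap.star_eq_adjoint,
        adjoint_adjoint]
      congr 1
      simp [Complex.star_def, ← Complex.ofReal_pow, Complex.conj_ofReal]
    · intro x
      rw [ContinuousLinearMap.reApplyInnerSelf_apply]
      have hcx : ⟪c x, x⟫_ℂ = (‖e‖ : ℂ) ^ 2 * ⟪x, x⟫_ℂ - ⟪e x, e x⟫_ℂ := by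
        simp only [hc_def, ContinuousLinearMap.sub_apply, ContinuousLinearMap.smul_apply,
          ContinuousLinearMap.one_apply, ContinuousLinearMap.mul_apply, inner_sub_left,
          inner_smul_left, adjoint_inner_left]
        congr 1
        simp [Complex.star_def, ← Complex.ofReal_pow, Complex.conj_ofReal]
      have hxx : ⟪x, x⟫_ℂ = ((‖x‖ ^ 2 : ℝ) : ℂ) := by
        rw [inner_self_eq_norm_sq_to_K]; norm_cast
      have hexx : ⟪e x, e x⟫_ℂ = ((‖e x‖ ^ 2 : ℝ) : ℂ) := by
        rw [inner_self_eq_norm_sq_to_K]; norm_cast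
      have hco : (‖e‖ : ℂ) ^ 2 = ((‖e‖ ^ 2 : ℝ) : ℂ) := by norm_cast
      rw [hcx, hxx, hexx, hco]
      have h1 : ‖e x‖ ≤ ‖e‖ * ‖x‖ := e.le_opNorm x
      have h2 := norm_nonneg e
      have h3 := norm_nonneg x
      have h4 := norm_nonneg (e x)
      simp only [RCLike.re_to_complex, ← Complex.ofReal_mul, ← Complex.ofReal_sub,
        Complex.ofReal_re]
      nlinarith
  have hdd_sa : IsSelfAdjoint (CFC.sqrt c) := IsSelfAdjoint.of_nonneg (CFC.sqrt_nonneg c)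
  have hdd_mul : adjoint (CFC.sqrt c) * CFC.sqrt c = c := by
    rw [← ContinuousLinearMap.star_eq_adjoint, hdd_sa.star_eq]
    exact CFC.sqrt_mul_sqrt_self c hc
  have hee := key_mul tp htp_inner e t
  have hdd2 := key_mul tp htp_inner (CFC.sqrt c) t
  rw [hdd_mul] at hdd2
  have hsum : adjoint e * e + c = ((‖e‖ : ℂ) ^ 2) • (1 : H₁ →L[ℂ] H₁) := by
    rw [hc_def, add_sub_cancel]
  have hadd : TensorProduct.map (adjoint e * e + c).toLinearMap (LinearMap.id : H₂ →ₗ[ℂ] H₂)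
      = TensorProduct.map (adjoint e * e).toLinearMap LinearMap.id
        + TensorProduct.map c.toLinearMap LinearMap.id := by
    rw [ContinuousLinearMap.coe_add, TensorProduct.map_add_left]
  have hsmul : TensorProduct.map ((((‖e‖ : ℂ) ^ 2) • (1 : H₁ →L[ℂ] H₁)).toLinearMap)
      (LinearMap.id : H₂ →ₗ[ℂ] H₂) t = ((‖e‖ : ℂ) ^ 2) • t := by
    have h9 : ((((‖e‖ : ℂ) ^ 2) • (1 : H₁ →L[ℂ] H₁)).toLinearMap)
        = ((‖e‖ : ℂ) ^ 2) • (LinearMap.id : H₁ →ₗ[ℂ] H₁) := by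
      rw [ContinuousLinearMap.coe_smul, ContinuousLinearMap.one_def, ContinuousLinearMap.coe_id]
    rw [h9, TensorProduct.map_smul_left, TensorProduct.map_id]
    simp only [LinearMap.smul_apply, LinearMap.id_apply]
  have hcomb : ((‖e‖ : ℂ) ^ 2) * ⟪TensorProduct.lift tp t, TensorProduct.lift tp t⟫_ℂ
      = (‖TensorProduct.lift tp (TensorProduct.map e.toLinearMap LinearMap.id t)‖ : ℂ) ^ 2
        + (‖TensorProduct.lift tp
            (TensorProduct.map (CFC.sqrt c).toLinearMap LinearMap.id t)‖ : ℂ) ^ 2 := by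
    rw [← hee, ← hdd2, ← inner_add_left, ← map_add, ← LinearMap.add_apply, ← hadd, hsum, hsmul]
    rw [map_smul, inner_smul_left]
    congr 1
    simp [Complex.star_def, ← Complex.ofReal_pow, Complex.conj_ofReal]
  have hre : ‖e‖ ^ 2 * ‖TensorProduct.lift tp t‖ ^ 2
      = ‖TensorProduct.lift tp (TensorProduct.map e.toLinearMap LinearMap.id t)‖ ^ 2
        + ‖TensorProduct.lift tp
            (TensorProduct.map (CFC.sqrt c).toLinearMap LinearMap.id t)‖ ^ 2 := by
    have h10 := congrArg Complex.re hcomb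
    have hLt : (⟪TensorProduct.lift tp t, TensorProduct.lift tp t⟫_ℂ).re
        = ‖TensorProduct.lift tp t‖ ^ 2 := by
      rw [← RCLike.re_to_complex]; exact inner_self_eq_norm_sq _
    rw [← Complex.ofReal_pow, Complex.re_ofReal_mul, hLt, Complex.add_re, ← Complex.ofReal_pow,
      ← Complex.ofReal_pow, Complex.ofReal_re, Complex.ofReal_re] at h10
    exact h10
  have hsq : ‖TensorProduct.lift tp (TensorProduct.map e.toLinearMap LinearMap.id t)‖ ^ 2
      ≤ (‖e‖ * ‖TensorProduct.lift tp t‖) ^ 2 := by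
    have hBnn : (0:ℝ) ≤ ‖TensorProduct.lift tp
        (TensorProduct.map (CFC.sqrt c).toLinearMap LinearMap.id t)‖ ^ 2 := sq_nonneg _
    nlinarith [hBnn]
  calc ‖TensorProduct.lift tp (TensorProduct.map e.toLinearMap LinearMap.id t)‖
      = Real.sqrt (‖TensorProduct.lift tp (TensorProduct.map e.toLinearMap LinearMap.id t)‖ ^ 2) :=
        (Real.sqrt_sq (norm_nonneg _)).symm
    _ ≤ Real.sqrt ((‖e‖ * ‖TensorProduct.lift tp t‖) ^ 2) := Real.sqrt_le_sqrt hsq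
    _ = ‖e‖ * ‖TensorProduct.lift tp t‖ := Real.sqrt_sq (by positivity)

include htp_inner in
lemma norm_tp (x : H₁) (y : H₂) : ‖tp x y‖ = ‖x‖ * ‖y‖ := by
  have h := htp_inner x x y y
  rw [inner_self_eq_norm_sq_to_K, inner_self_eq_norm_sq_to_K, inner_self_eq_norm_sq_to_K] at h
  have h2 : (‖tp x y‖ ^ 2 : ℝ) = (‖x‖ * ‖y‖) ^ 2 := by
    rw [mul_pow]
    exact_mod_cast h
  calc ‖tp x y‖ = Real.sqrt (‖tp x y‖ ^ 2) := (Real.sqrt_sq (norm_nonneg _)).symm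
    _ = Real.sqrt ((‖x‖ * ‖y‖) ^ 2) := by rw [h2]
    _ = ‖x‖ * ‖y‖ := Real.sqrt_sq (by positivity)

variable (htp_dense :
      (Submodule.span ℂ {z : H | ∃ x y, z = tp x y}).topologicalClosure = ⊤)

lemma range_lift : LinearMap.range (TensorProduct.lift tp)
    = Submodule.span ℂ {z : H | ∃ x y, z = tp x y} := by
  apply le_antisymm
  · rintro _ ⟨t, rfl⟩
    induction t using TensorProduct.induction_on with
    | zero => simp
    | tmul x y => exact Submodule.subset_span ⟨x, y, by simp⟩
    | add u v hu hv => rw [map_add]; exact add_mem hu hv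
  · rw [Submodule.span_le]
    rintro _ ⟨x, y, rfl⟩
    exact ⟨x ⊗ₜ y, by simp⟩

include htp_dense in
lemma dense_span_tp : Dense ((Submodule.span ℂ {z : H | ∃ x y, z = tp x y} : Submodule ℂ H)
    : Set H) := by
  rw [dense_iff_closure_eq]
  have := congrArg (fun (K : Submodule ℂ H) => (K : Set H)) htp_dense
  simpa [Submodule.topologicalClosure_coe] using this

include htp_inner htp_dense in
lemma exists_ext1 (e : H₁ →L[ℂ] H₁) :
    ∃ E : H →L[ℂ] H, ∀ x y, E (tp x y) = tp (e x) y := by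
  classical
  set L : H₁ ⊗[ℂ] H₂ →ₗ[ℂ] H := TensorProduct.lift tp with hL
  set f : H₁ ⊗[ℂ] H₂ →ₗ[ℂ] H
    := L ∘ₗ (TensorProduct.map e.toLinearMap LinearMap.id) with hf
  have hbound : ∀ t, ‖f t‖ ≤ ‖e‖ * ‖L t‖ := fun t => norm_lift_map_le tp htp_inner e t
  have hle : LinearMap.ker L ≤ LinearMap.ker f := by
    intro t ht
    rw [LinearMap.mem_ker] at ht ⊢
    have h1 := hbound t
    rw [ht, norm_zero, mul_zero] at h1
    exact norm_le_zero_iff.mp h1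
  set g : ↥(LinearMap.range L) →ₗ[ℂ] H :=
    (Submodule.liftQ (LinearMap.ker L) f hle) ∘ₗ
      (LinearMap.quotKerEquivRange L).symm.toLinearMap with hg_def
  have hg : ∀ (t : H₁ ⊗[ℂ] H₂) (h : L t ∈ LinearMap.range L), g ⟨L t, h⟩ = f t := by
    intro t h
    show (Submodule.liftQ (LinearMap.ker L) f hle)
      ((LinearMap.quotKerEquivRange L).symm ⟨L t, h⟩) = f t
    rw [LinearMap.quotKerEquivRange_symm_apply_image]
    rfl
  have hgnorm : ∀ v : ↥(LinearMap.range L), ‖g v‖ ≤ ‖e‖ * ‖v‖ := by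
    rintro ⟨w, t, rfl⟩
    rw [hg t ⟨t, rfl⟩]
    exact hbound t
  set gc : ↥(LinearMap.range L) →L[ℂ] H := LinearMap.mkContinuous g ‖e‖ hgnorm with hgc
  have hdense : DenseRange ((LinearMap.range L).subtypeL) := by
    have h1 : LinearMap.range L = Submodule.span ℂ {z : H | ∃ x y, z = tp x y} :=
      range_lift tp
    have h2 : Dense ((LinearMap.range L : Submodule ℂ H) : Set H) := by
      rw [h1]; exact dense_span_tp tp htp_dense
    have h3 : Set.range ((LinearMap.range L).subtypeL)
        = ((LinearMap.range L : Submodule ℂ H) : Set H) := Subtype.range_coe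
    rw [DenseRange, h3]
    exact h2
  have hui : IsUniformInducing ((LinearMap.range L).subtypeL) :=
    isometry_subtype_coe.isUniformInducing
  refine ⟨gc.extend (LinearMap.range L).subtypeL, ?_⟩
  intro x y
  have hmem : tp x y ∈ LinearMap.range L := ⟨x ⊗ₜ y, by simp [hL]⟩
  have h4 : tp x y = (LinearMap.range L).subtypeL ⟨tp x y, hmem⟩ := rfl
  rw [h4, ContinuousLinearMap.extend_eq gc hdense hui]
  show g ⟨tp x y, hmem⟩ = tp (e x) y
  have h5 : (⟨tp x y, hmem⟩ : ↥(LinearMap.range L)) = ⟨L (x ⊗ₜ[ℂ] y), LinearMap.mem_range_self L _⟩ :=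
    Subtype.ext (by simp [hL])
  rw [h5, hg]
  simp [hf, hL]

include htp_dense in
lemma eq_zero_of_inner_tp (w : H) (hw : ∀ x y, ⟪w, tp x y⟫_ℂ = 0) : w = 0 := by
  have hd := dense_span_tp tp htp_dense
  have h1 : (fun v : H => ⟪w, v⟫_ℂ) = fun _ => (0 : ℂ) := by
    apply Continuous.ext_on hd (continuous_const.inner continuous_id) continuous_const
    intro v hv
    induction hv using Submodule.span_induction with
    | mem z hz => obtain ⟨x, y, rfl⟩ := hz; exact hw x y
    | zero => simp
    | add a b _ _ ha hb => simp only [id_eq] at ha hb; simp [inner_add_right, ha, hb]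
    | smul c u _ hu => simp only [id_eq] at hu; simp [inner_smul_right, hu]
  have h2 := congrFun h1 w
  simpa [inner_self_eq_zero] using h2

include htp_inner htp_dense in
lemma inner_ext_tp (A B : H →L[ℂ] H)
    (h : ∀ x y x' y', ⟪A (tp x y), tp x' y'⟫_ℂ = ⟪tp x y, B (tp x' y')⟫_ℂ)
    (u v : H) : ⟪A u, v⟫_ℂ = ⟪u, B v⟫_ℂ := by
  have hd := dense_span_tp tp htp_dense
  have key : ∀ x y v, ⟪A (tp x y), v⟫_ℂ = ⟪tp x y, B v⟫_ℂ := by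
    intro x y
    have h1 : (fun v : H => ⟪A (tp x y), v⟫_ℂ) = (fun v : H => ⟪tp x y, B v⟫_ℂ) := by
      apply Continuous.ext_on hd (continuous_const.inner continuous_id)
        (continuous_const.inner B.continuous)
      intro v hv
      induction hv using Submodule.span_induction with
      | mem w hw => obtain ⟨x', y', rfl⟩ := hw; exact h x y x' y'
      | zero => simp
      | add a b _ _ ha hb => simp only [id_eq] at ha hb; simp [inner_add_right, map_add, ha, hb]
      | smul c w _ hw => simp only [id_eq] at hw; simp [inner_smul_right, map_smul, hw]
    exact fun v => congrFun h1 v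
  have h2 : (fun u : H => ⟪A u, v⟫_ℂ) = (fun u : H => ⟪u, B v⟫_ℂ) := by
    apply Continuous.ext_on hd (A.continuous.inner continuous_const)
      (continuous_id.inner continuous_const)
    intro u hu
    induction hu using Submodule.span_induction with
    | mem w hw => obtain ⟨x, y, rfl⟩ := hw; exact key x y v
    | zero => simp
    | add a b _ _ ha hb => simp only [id_eq] at ha hb; simp [inner_add_left, map_add, ha, hb]
    | smul c w _ hw => simp only [id_eq] at hw; simp [inner_smul_left, map_smul, hw]
  exact congrFun h2 u

include htp_dense in
lemma clm_ext_tp {A B : H →L[ℂ] H} (h : ∀ x y, A (tp x y) = B (tp x y)) : A = B := by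
  have hd := dense_span_tp tp htp_dense
  have h1 : (⇑A : H → H) = ⇑B := by
    apply Continuous.ext_on hd A.continuous B.continuous
    intro v hv
    induction hv using Submodule.span_induction with
    | mem w hw => obtain ⟨x, y, rfl⟩ := hw; exact h x y
    | zero => simp
    | add a b _ _ ha hb => simp [map_add, ha, hb]
    | smul c w _ hw => simp [map_smul, hw]
  exact ContinuousLinearMap.ext fun v => congrFun h1 v

include htp_inner htp_dense in
lemma ext1_sym (c : H₁ →L[ℂ] H₁) (hc : ContinuousLinearMap.adjoint c = c)
    (s : H →L[ℂ] H) (hs : ∀ x y, s (tp x y) = tp (c x) y) :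
    ∀ u v, ⟪s u, v⟫_ℂ = ⟪u, s v⟫_ℂ := by
  refine fun u v => inner_ext_tp tp htp_inner htp_dense s s ?_ u v
  intro x y x' y'
  rw [hs, hs, htp_inner, htp_inner]
  congr 1
  calc ⟪c x, x'⟫_ℂ = ⟪ContinuousLinearMap.adjoint c x, x'⟫_ℂ := by rw [hc]
    _ = ⟪x, c x'⟫_ℂ := by rw [ContinuousLinearMap.adjoint_inner_left]

end Stmt8



/-- If `a₁`, `a₂` are positive bounded operators on Hilbert spaces `H₁`, `H₂`,
then the kernel of `a₁ ⊗ id + id ⊗ a₂` on the Hilbert tensor product `H₁ ⊗ H₂` equals the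
closed tensor product `ker a₁ ⊗ ker a₂`.  The Hilbert tensor product is axiomatized as a
Hilbert space `H` with a bilinear map `tp` having dense span of elementary tensors and
multiplicative inner products. -/
theorem stmt_8 {H₁ H₂ H : Type*}
    [NormedAddCommGroup H₁] [InnerProductSpace ℂ H₁] [CompleteSpace H₁]
    [NormedAddCommGroup H₂] [InnerProductSpace ℂ H₂] [CompleteSpace H₂]
    [NormedAddCommGroup H] [InnerProductSpace ℂ H] [CompleteSpace H]
    (tp : H₁ →ₗ[ℂ] H₂ →ₗ[ℂ] H)
    (htp_inner : ∀ (x x' : H₁) (y y' : H₂),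
      ⟪tp x y, tp x' y'⟫_ℂ = ⟪x, x'⟫_ℂ * ⟪y, y'⟫_ℂ)
    (htp_dense :
      (Submodule.span ℂ {z : H | ∃ x y, z = tp x y}).topologicalClosure = ⊤)
    (a₁ : H₁ →L[ℂ] H₁) (a₂ : H₂ →L[ℂ] H₂) (a : H →L[ℂ] H)
    (ha₁sa : IsSelfAdjoint a₁) (ha₁pos : ∀ x, 0 ≤ (⟪a₁ x, x⟫_ℂ).re)
    (ha₂sa : IsSelfAdjoint a₂) (ha₂pos : ∀ y, 0 ≤ (⟪a₂ y, y⟫_ℂ).re)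
    (ha : ∀ (x : H₁) (y : H₂), a (tp x y) = tp (a₁ x) y + tp x (a₂ y)) :
    LinearMap.ker (a : H →ₗ[ℂ] H) =
      (Submodule.span ℂ
        {z : H | ∃ x ∈ LinearMap.ker (a₁ : H₁ →ₗ[ℂ] H₁), ∃ y ∈ LinearMap.ker (a₂ : H₂ →ₗ[ℂ] H₂), z = tp x y}
        ).topologicalClosure := by
  classical
  -- flipped data
  have htp_inner' : ∀ (y y' : H₂) (x x' : H₁),
      ⟪tp.flip y x, tp.flip y' x'⟫_ℂ = ⟪y, y'⟫_ℂ * ⟪x, x'⟫_ℂ := by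
    intro y y' x x'
    rw [LinearMap.flip_apply, LinearMap.flip_apply, htp_inner, mul_comm]
  have hset : {z : H | ∃ y x, z = tp.flip y x} = {z : H | ∃ x y, z = tp x y} := by
    ext w
    constructor
    · rintro ⟨y, x, rfl⟩; exact ⟨x, y, rfl⟩
    · rintro ⟨x, y, rfl⟩; exact ⟨y, x, rfl⟩
  have htp_dense' :
      (Submodule.span ℂ {z : H | ∃ y x, z = tp.flip y x}).topologicalClosure = ⊤ := by
    rw [hset]; exact htp_dense
  apply le_antisymm
  swap
  · apply Submodule.topologicalClosure_minimal
    · rw [Submodule.span_le]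
      rintro _ ⟨x, hx, y, hy, rfl⟩
      rw [SetLike.mem_coe, LinearMap.mem_ker, ContinuousLinearMap.coe_coe, ha x y]
      rw [LinearMap.mem_ker, ContinuousLinearMap.coe_coe] at hx hy
      rw [hx, hy]
      simp
    · exact ContinuousLinearMap.isClosed_ker a
  · intro z hz
    rw [LinearMap.mem_ker, ContinuousLinearMap.coe_coe] at hz
    -- positivity and square roots
    have ha₁nn : (0 : H₁ →L[ℂ] H₁) ≤ a₁ := by
      rw [ContinuousLinearMap.nonneg_iff_isPositive]
      exact ⟨ha₁sa.isSymmetric, fun x => ha₁pos x⟩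
    have ha₂nn : (0 : H₂ →L[ℂ] H₂) ≤ a₂ := by
      rw [ContinuousLinearMap.nonneg_iff_isPositive]
      exact ⟨ha₂sa.isSymmetric, fun y => ha₂pos y⟩
    have hd₁sa : IsSelfAdjoint (CFC.sqrt a₁) := .of_nonneg (CFC.sqrt_nonneg _)
    have hd₂sa : IsSelfAdjoint (CFC.sqrt a₂) := .of_nonneg (CFC.sqrt_nonneg _)
    have hd₁ : CFC.sqrt a₁ * CFC.sqrt a₁ = a₁ := CFC.sqrt_mul_sqrt_self a₁ ha₁nn
    have hd₂ : CFC.sqrt a₂ * CFC.sqrt a₂ = a₂ := CFC.sqrt_mul_sqrt_self a₂ ha₂nn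
    have hd₁adj : ContinuousLinearMap.adjoint (CFC.sqrt a₁) = CFC.sqrt a₁ := by
      rw [← ContinuousLinearMap.star_eq_adjoint]; exact hd₁sa
    have hd₂adj : ContinuousLinearMap.adjoint (CFC.sqrt a₂) = CFC.sqrt a₂ := by
      rw [← ContinuousLinearMap.star_eq_adjoint]; exact hd₂sa
    obtain ⟨s₁, hs₁⟩ := Stmt8.exists_ext1 tp htp_inner htp_dense (CFC.sqrt a₁)
    obtain ⟨s₂, hs₂⟩ := Stmt8.exists_ext1 tp.flip htp_inner' htp_dense' (CFC.sqrt a₂)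
    have hs₂' : ∀ x y, s₂ (tp x y) = tp x (CFC.sqrt a₂ y) := by
      intro x y
      have := hs₂ y x
      simpa [LinearMap.flip_apply] using this
    have hs₁sym : ∀ u v, ⟪s₁ u, v⟫_ℂ = ⟪u, s₁ v⟫_ℂ :=
      Stmt8.ext1_sym tp htp_inner htp_dense (CFC.sqrt a₁) hd₁adj s₁ hs₁
    have hs₂sym : ∀ u v, ⟪s₂ u, v⟫_ℂ = ⟪u, s₂ v⟫_ℂ :=
      Stmt8.ext1_sym tp.flip htp_inner' htp_dense' (CFC.sqrt a₂) hd₂adj s₂ hs₂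
    -- a = s₁ ∘ s₁ + s₂ ∘ s₂
    have hsum : a = s₁ ∘L s₁ + s₂ ∘L s₂ := by
      apply Stmt8.clm_ext_tp tp htp_dense
      intro x y
      rw [ha x y]
      simp only [ContinuousLinearMap.add_apply, ContinuousLinearMap.comp_apply]
      rw [hs₁, hs₁, hs₂', hs₂']
      congr 2
      · rw [← ContinuousLinearMap.mul_apply, hd₁]
      · rw [← ContinuousLinearMap.mul_apply, hd₂]
    -- s₁ z = 0 and s₂ z = 0
    have hz0 : ⟪a z, z⟫_ℂ = 0 := by rw [hz, inner_zero_left]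
    rw [hsum] at hz0
    simp only [ContinuousLinearMap.add_apply, ContinuousLinearMap.comp_apply,
      inner_add_left] at hz0
    rw [hs₁sym (s₁ z) z, hs₂sym (s₂ z) z] at hz0
    have h01 : ‖s₁ z‖ ^ 2 + ‖s₂ z‖ ^ 2 = 0 := by
      have h := congrArg Complex.re hz0
      rw [Complex.add_re, Complex.zero_re] at h
      have e1 : (⟪s₁ z, s₁ z⟫_ℂ).re = ‖s₁ z‖ ^ 2 := by
        rw [← RCLike.re_to_complex]; exact inner_self_eq_norm_sq _
      have e2 : (⟪s₂ z, s₂ z⟫_ℂ).re = ‖s₂ z‖ ^ 2 := by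
        rw [← RCLike.re_to_complex]; exact inner_self_eq_norm_sq _
      rw [e1, e2] at h
      exact h
    have hs₁z : s₁ z = 0 := by
      rw [← norm_eq_zero]
      nlinarith [sq_nonneg ‖s₁ z‖, sq_nonneg ‖s₂ z‖, norm_nonneg (s₁ z), norm_nonneg (s₂ z)]
    have hs₂z : s₂ z = 0 := by
      rw [← norm_eq_zero]
      nlinarith [sq_nonneg ‖s₁ z‖, sq_nonneg ‖s₂ z‖, norm_nonneg (s₁ z), norm_nonneg (s₂ z)]
    -- z is orthogonal to tp (a₁ x) y and tp x (a₂ y)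
    have hz1 : ∀ (x : H₁) (y : H₂), ⟪z, tp (a₁ x) y⟫_ℂ = 0 := by
      intro x y
      have h1 : tp (a₁ x) y = s₁ (tp (CFC.sqrt a₁ x) y) := by
        rw [hs₁, ← ContinuousLinearMap.mul_apply, hd₁]
      rw [h1, ← hs₁sym, hs₁z, inner_zero_left]
    have hz2 : ∀ (x : H₁) (y : H₂), ⟪z, tp x (a₂ y)⟫_ℂ = 0 := by
      intro x y
      have h1 : tp x (a₂ y) = s₂ (tp x (CFC.sqrt a₂ y)) := by
        rw [hs₂', ← ContinuousLinearMap.mul_apply, hd₂]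
      rw [h1, ← hs₂sym, hs₂z, inner_zero_left]
    -- extend to orthogonal complements of the kernels
    have hka : LinearMap.ker (a₁ : H₁ →ₗ[ℂ] H₁) = (LinearMap.range (a₁ : H₁ →ₗ[ℂ] H₁))ᗮ := by
      ext v
      simp only [LinearMap.mem_ker, ContinuousLinearMap.coe_coe, Submodule.mem_orthogonal]
      constructor
      · rintro hv _ ⟨w, rfl⟩
        rw [← ha₁sa.adjoint_eq, ContinuousLinearMap.coe_coe, ContinuousLinearMap.adjoint_inner_left, hv, inner_zero_right]
      · intro hv
        have h3 := hv (a₁ (a₁ v)) ⟨a₁ v, rfl⟩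
        rw [← ha₁sa.adjoint_eq, ContinuousLinearMap.adjoint_inner_left, ha₁sa.adjoint_eq] at h3
        exact inner_self_eq_zero.mp h3
    have hkb : LinearMap.ker (a₂ : H₂ →ₗ[ℂ] H₂) = (LinearMap.range (a₂ : H₂ →ₗ[ℂ] H₂))ᗮ := by
      ext v
      simp only [LinearMap.mem_ker, ContinuousLinearMap.coe_coe, Submodule.mem_orthogonal]
      constructor
      · rintro hv _ ⟨w, rfl⟩
        rw [← ha₂sa.adjoint_eq, ContinuousLinearMap.coe_coe, ContinuousLinearMap.adjoint_inner_left, hv, inner_zero_right]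
      · intro hv
        have h3 := hv (a₂ (a₂ v)) ⟨a₂ v, rfl⟩
        rw [← ha₂sa.adjoint_eq, ContinuousLinearMap.adjoint_inner_left, ha₂sa.adjoint_eq] at h3
        exact inner_self_eq_zero.mp h3
    have hz1' : ∀ (y : H₂) (u : H₁), u ∈ (LinearMap.ker (a₁ : H₁ →ₗ[ℂ] H₁))ᗮ → ⟪z, tp u y⟫_ℂ = 0 := by
      intro y
      have hTy : ∀ x : H₁, ‖tp.flip y x‖ ≤ ‖y‖ * ‖x‖ := by
        intro x
        rw [LinearMap.flip_apply, Stmt8.norm_tp tp htp_inner, mul_comm]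
      set Ty : H₁ →L[ℂ] H := LinearMap.mkContinuous (tp.flip y) ‖y‖ hTy with hTydef
      set φ : H₁ →L[ℂ] ℂ := (innerSL ℂ z).comp Ty with hφdef
      have hφappl : ∀ u, φ u = ⟪z, tp u y⟫_ℂ := fun u => rfl
      have hrange : LinearMap.range (a₁ : H₁ →ₗ[ℂ] H₁) ≤ LinearMap.ker (φ : H₁ →ₗ[ℂ] ℂ) := by
        rintro _ ⟨x, rfl⟩
        rw [LinearMap.mem_ker, ContinuousLinearMap.coe_coe, hφappl]
        exact hz1 x y
      have hclosed : (LinearMap.range (a₁ : H₁ →ₗ[ℂ] H₁)).topologicalClosure ≤ LinearMap.ker (φ : H₁ →ₗ[ℂ] ℂ) :=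
        Submodule.topologicalClosure_minimal _ hrange (ContinuousLinearMap.isClosed_ker φ)
      intro u hu
      have h4 : u ∈ (LinearMap.range (a₁ : H₁ →ₗ[ℂ] H₁)).topologicalClosure := by
        rw [← Submodule.orthogonal_orthogonal_eq_closure, ← hka]
        exact hu
      have h5 := hclosed h4
      rw [LinearMap.mem_ker, ContinuousLinearMap.coe_coe, hφappl] at h5
      exact h5
    have hz2' : ∀ (x : H₁) (v : H₂), v ∈ (LinearMap.ker (a₂ : H₂ →ₗ[ℂ] H₂))ᗮ → ⟪z, tp x v⟫_ℂ = 0 := by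
      intro x
      have hTx : ∀ y : H₂, ‖tp x y‖ ≤ ‖x‖ * ‖y‖ := by
        intro y
        rw [Stmt8.norm_tp tp htp_inner]
      set Tx : H₂ →L[ℂ] H := LinearMap.mkContinuous (tp x) ‖x‖ hTx with hTxdef
      set φ : H₂ →L[ℂ] ℂ := (innerSL ℂ z).comp Tx with hφdef
      have hφappl : ∀ v, φ v = ⟪z, tp x v⟫_ℂ := fun v => rfl
      have hrange : LinearMap.range (a₂ : H₂ →ₗ[ℂ] H₂) ≤ LinearMap.ker (φ : H₂ →ₗ[ℂ] ℂ) := by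
        rintro _ ⟨y, rfl⟩
        rw [LinearMap.mem_ker, ContinuousLinearMap.coe_coe, hφappl]
        exact hz2 x y
      have hclosed : (LinearMap.range (a₂ : H₂ →ₗ[ℂ] H₂)).topologicalClosure ≤ LinearMap.ker (φ : H₂ →ₗ[ℂ] ℂ) :=
        Submodule.topologicalClosure_minimal _ hrange (ContinuousLinearMap.isClosed_ker φ)
      intro v hv
      have h4 : v ∈ (LinearMap.range (a₂ : H₂ →ₗ[ℂ] H₂)).topologicalClosure := by
        rw [← Submodule.orthogonal_orthogonal_eq_closure, ← hkb]
        exact hv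
      have h5 := hclosed h4
      rw [LinearMap.mem_ker, ContinuousLinearMap.coe_coe, hφappl] at h5
      exact h5
    -- projections onto the kernels
    haveI : CompleteSpace (LinearMap.ker (a₁ : H₁ →ₗ[ℂ] H₁)) := (ContinuousLinearMap.isClosed_ker a₁).completeSpace_coe
    haveI : CompleteSpace (LinearMap.ker (a₂ : H₂ →ₗ[ℂ] H₂)) := (ContinuousLinearMap.isClosed_ker a₂).completeSpace_coe
    set P : H₁ →L[ℂ] H₁ :=
      (LinearMap.ker (a₁ : H₁ →ₗ[ℂ] H₁)).subtypeL ∘L Submodule.orthogonalProjection (LinearMap.ker (a₁ : H₁ →ₗ[ℂ] H₁)) with hPdef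
    set Q : H₂ →L[ℂ] H₂ :=
      (LinearMap.ker (a₂ : H₂ →ₗ[ℂ] H₂)).subtypeL ∘L Submodule.orthogonalProjection (LinearMap.ker (a₂ : H₂ →ₗ[ℂ] H₂)) with hQdef
    have hPadj : ContinuousLinearMap.adjoint P = P := by
      rw [← ContinuousLinearMap.star_eq_adjoint]
      exact isSelfAdjoint_starProjection _
    have hQadj : ContinuousLinearMap.adjoint Q = Q := by
      rw [← ContinuousLinearMap.star_eq_adjoint]
      exact isSelfAdjoint_starProjection _
    obtain ⟨sP, hsP⟩ := Stmt8.exists_ext1 tp htp_inner htp_dense P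
    obtain ⟨sQ, hsQ⟩ := Stmt8.exists_ext1 tp.flip htp_inner' htp_dense' Q
    have hsQ' : ∀ x y, sQ (tp x y) = tp x (Q y) := by
      intro x y
      have := hsQ y x
      simpa [LinearMap.flip_apply] using this
    have hsPsym : ∀ u v, ⟪sP u, v⟫_ℂ = ⟪u, sP v⟫_ℂ :=
      Stmt8.ext1_sym tp htp_inner htp_dense P hPadj sP hsP
    have hsQsym : ∀ u v, ⟪sQ u, v⟫_ℂ = ⟪u, sQ v⟫_ℂ :=
      Stmt8.ext1_sym tp.flip htp_inner' htp_dense' Q hQadj sQ hsQ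
    have hsPz : sP z = z := by
      have hw : ∀ x y, ⟪z - sP z, tp x y⟫_ℂ = 0 := by
        intro x y
        rw [inner_sub_left, hsPsym z (tp x y), hsP]
        have h6 : ⟪z, tp x y⟫_ℂ - ⟪z, tp (P x) y⟫_ℂ = ⟪z, tp (x - P x) y⟫_ℂ := by
          rw [map_sub, LinearMap.sub_apply, inner_sub_right]
        rw [h6]
        exact hz1' y (x - P x) (Submodule.sub_starProjection_mem_orthogonal x)
      have h7 := Stmt8.eq_zero_of_inner_tp tp htp_dense (z - sP z) hw
      rw [sub_eq_zero] at h7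
      exact h7.symm
    have hsQz : sQ z = z := by
      have hw : ∀ x y, ⟪z - sQ z, tp x y⟫_ℂ = 0 := by
        intro x y
        rw [inner_sub_left, hsQsym z (tp x y), hsQ' x y]
        have h6 : ⟪z, tp x y⟫_ℂ - ⟪z, tp x (Q y)⟫_ℂ = ⟪z, tp x (y - Q y)⟫_ℂ := by
          rw [map_sub, inner_sub_right]
        rw [h6]
        exact hz2' x (y - Q y) (Submodule.sub_starProjection_mem_orthogonal y)
      have h7 := Stmt8.eq_zero_of_inner_tp tp htp_dense (z - sQ z) hw
      rw [sub_eq_zero] at h7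
      exact h7.symm
    -- conclusion
    set N := (Submodule.span ℂ
      {w : H | ∃ x ∈ LinearMap.ker (a₁ : H₁ →ₗ[ℂ] H₁), ∃ y ∈ LinearMap.ker (a₂ : H₂ →ₗ[ℂ] H₂), w = tp x y}).topologicalClosure
      with hNdef
    have hT : sP (sQ z) ∈ N := by
      have hsub : Submodule.span ℂ {w : H | ∃ x y, w = tp x y}
          ≤ N.comap ((sP ∘L sQ) : H →ₗ[ℂ] H) := by
        rw [Submodule.span_le]
        rintro _ ⟨x, y, rfl⟩
        simp only [SetLike.mem_coe, Submodule.mem_comap, ContinuousLinearMap.coe_coe,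
          ContinuousLinearMap.comp_apply]
        rw [hsQ' x y, hsP]
        apply Submodule.le_topologicalClosure
        apply Submodule.subset_span
        refine ⟨P x, ?_, Q y, ?_, rfl⟩
        · exact SetLike.coe_mem (Submodule.orthogonalProjection (LinearMap.ker (a₁ : H₁ →ₗ[ℂ] H₁)) x)
        · exact SetLike.coe_mem (Submodule.orthogonalProjection (LinearMap.ker (a₂ : H₂ →ₗ[ℂ] H₂)) y)
      have hclosedC : IsClosed ((N.comap ((sP ∘L sQ) : H →ₗ[ℂ] H) : Submodule ℂ H) : Set H) := by
        have : ((N.comap ((sP ∘L sQ) : H →ₗ[ℂ] H) : Submodule ℂ H) : Set H)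
            = (⇑(sP ∘L sQ)) ⁻¹' (N : Set H) := rfl
        rw [this]
        exact IsClosed.preimage (sP ∘L sQ).continuous (Submodule.isClosed_topologicalClosure _)
      have htop := Submodule.topologicalClosure_minimal _ hsub hclosedC
      rw [htp_dense] at htop
      have hzmem : z ∈ N.comap ((sP ∘L sQ) : H →ₗ[ℂ] H) := htop trivial
      simpa using hzmem
    rwa [hsQz, hsPz] at hT
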